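/- For every subset S ⊆ U with signature x with respect to the partition P = (P_1,…,P_r), the rank of S in M_even satisfies rk_{M_even}(S) = Σ_{i=1}^{r} x_i − max(0, max_{even a, 1 ≤ a ≤ r} ℓ_a(x)). -/

import Mathlib

/-- Independence in the nested matroid defined by a partition `Q 1, …, Q m` and integer
thresholds `σ 1, …, σ m`: a set `I` is independent iff
`Σ_{s=t}^m |I ∩ Q s| ≤ Σ_{s=t}^m σ s` for all `1 ≤ t ≤ m`. -/
def NIndep {α : Type*} [DecidableEq α] (m : ℕ) (Q : ℕ → Finset α) (σ : ℕ → ℤ)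
    (I : Finset α) : Prop :=
  ∀ t ∈ Finset.Icc 1 m,
    (∑ s ∈ Finset.Icc t m, ((I ∩ Q s).card : ℤ)) ≤ ∑ s ∈ Finset.Icc t m, σ s

/-- The rank of `S` with respect to an independence predicate: the maximum cardinality of
an independent subset of `S`. -/
noncomputable def nrank {α : Type*} (pred : Finset α → Prop) (S : Finset α) : ℕ :=
  sSup {c : ℕ | ∃ I : Finset α, I ⊆ S ∧ pred I ∧ I.card = c}

/-- `B` is a base (maximal independent set) for the independence predicate `pred`. -/
def IsNBase {α : Type*} (pred : Finset α → Prop) (B : Finset α) : Prop :=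
  pred B ∧ ∀ B' : Finset α, pred B' → B ⊆ B' → B' = B

/-- The thresholds `τ_1 = ⋯ = τ_{r−1} = n/2 − g` and `τ_r = n/2 − g + gr/4`, for
`r = 2k+1`. -/
def tauF (n g k : ℕ) : ℕ → ℤ :=
  fun t => if t = 2 * k + 1 then (n : ℤ) / 2 - (g : ℤ) + ((g : ℤ) * (2 * (k : ℤ) + 1)) / 4
    else (n : ℤ) / 2 - (g : ℤ)

/-- `θ = n/2 − g/4`. -/
def thetaF (n g : ℕ) : ℤ := (n : ℤ) / 2 - (g : ℤ) / 4

/-- `ℓ_t(x) = Σ_{s=t}^{2k+1} (x_s − τ_s)`. -/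
def ellT (n g k : ℕ) (x : ℕ → ℤ) (t : ℕ) : ℤ :=
  ∑ s ∈ Finset.Icc t (2 * k + 1), (x s - tauF n g k s)

/-- The signature of `S` with respect to the partition `P`. -/
def sigF {α : Type*} [DecidableEq α] (P : ℕ → Finset α) (S : Finset α) : ℕ → ℤ :=
  fun j => ((S ∩ P j).card : ℤ)

/-- The partition of `M_odd`: `(P_1 ∪ P_2, P_3 ∪ P_4, …, P_{r−2} ∪ P_{r−1}, P_r)`,
indexed `1, …, k+1`. -/
def QoddF {α : Type*} [DecidableEq α] (P : ℕ → Finset α) (k : ℕ) : ℕ → Finset α :=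
  fun j => if j ≤ k then P (2 * j - 1) ∪ P (2 * j) else P (2 * k + 1)

/-- The thresholds of `M_odd`: `(τ_1 + τ_2, τ_3 + τ_4, …, τ_{r−2} + τ_{r−1}, τ_r)`. -/
def soddF (n g k : ℕ) : ℕ → ℤ :=
  fun j => if j ≤ k then tauF n g k (2 * j - 1) + tauF n g k (2 * j)
    else tauF n g k (2 * k + 1)

/-- The partition of `M_even`: `(P_1, P_2 ∪ P_3, P_4 ∪ P_5, …, P_{r−1} ∪ P_r)`,
indexed `1, …, k+1`. -/
def QevenF {α : Type*} [DecidableEq α] (P : ℕ → Finset α) (k : ℕ) : ℕ → Finset α :=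
  fun j => if j = 1 then P 1 else P (2 * j - 2) ∪ P (2 * j - 1)

/-- The thresholds of `M_even`: `(n, τ_2 + τ_3, τ_4 + τ_5, …, τ_{r−1} + τ_r)`. -/
def sevenF (n g k : ℕ) : ℕ → ℤ :=
  fun j => if j = 1 then (n : ℤ) else tauF n g k (2 * j - 2) + tauF n g k (2 * j - 1)

/-- The partition of `M'_even`:
`(P_1, P_2 ∪ P_3, …, P_{r−3} ∪ P_{r−2}, P_{r−1}, P_r)`, indexed `1, …, k+2`. -/
def QevenF' {α : Type*} [DecidableEq α] (P : ℕ → Finset α) (k : ℕ) : ℕ → Finset α :=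
  fun j => if j = 1 then P 1
    else if j ≤ k then P (2 * j - 2) ∪ P (2 * j - 1)
    else if j = k + 1 then P (2 * k)
    else P (2 * k + 1)

/-- The thresholds of `M'_even`:
`(n, τ_2 + τ_3, …, τ_{r−3} + τ_{r−2}, τ_{r−1} + τ_r − θ, θ)`. -/
def sevenF' (n g k : ℕ) : ℕ → ℤ :=
  fun j => if j = 1 then (n : ℤ)
    else if j ≤ k then tauF n g k (2 * j - 2) + tauF n g k (2 * j - 1)
    else if j = k + 1 then tauF n g k (2 * k) + tauF n g k (2 * k + 1) - thetaF n g
    else thetaF n g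

open Finset

lemma sumA (f : ℕ → ℤ) (b : ℕ) : ∀ t, 2 ≤ t →
    ∑ s ∈ Finset.Icc t (b+1), (f (2*s-2) + f (2*s-1))
      = ∑ i ∈ Finset.Icc (2*t-2) (2*b+1), f i := by
  induction b with
  | zero =>
    intro t ht
    rw [Finset.Icc_eq_empty (by omega), Finset.Icc_eq_empty (by omega),
      Finset.sum_empty, Finset.sum_empty]
  | succ b ih =>
    intro t ht
    rcases le_or_gt t (b+1) with h | h
    · have hR : ∑ i ∈ Finset.Icc (2*t-2) (2*(b+1)+1), f i
          = (∑ i ∈ Finset.Icc (2*t-2) (2*b+1), f i) + f (2*b+2) + f (2*b+3) := by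
        rw [show 2*(b+1)+1 = 2*b+2+1 from by ring, Finset.sum_Icc_succ_top (by omega),
          show 2*b+2 = 2*b+1+1 from by ring, Finset.sum_Icc_succ_top (by omega)]
      rw [Finset.sum_Icc_succ_top (by omega : t ≤ b+1+1), ih t ht, hR,
        show 2*(b+1+1)-2 = 2*b+2 from by omega, show 2*(b+1+1)-1 = 2*b+3 from by omega]
      ring
    · rcases eq_or_lt_of_le (by omega : b+2 ≤ t) with h2 | h2
      · subst h2
        have hR : ∑ i ∈ Finset.Icc (2*(b+2)-2) (2*(b+1)+1), f i
            = f (2*b+2) + f (2*b+3) := by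
          rw [show 2*(b+2)-2 = 2*b+2 from by omega, show 2*(b+1)+1 = 2*b+2+1 from by ring,
            Finset.sum_Icc_succ_top (by omega), Finset.Icc_self, Finset.sum_singleton]
        rw [Finset.Icc_self, Finset.sum_singleton, hR,
          show 2*(b+2)-2 = 2*b+2 from by omega, show 2*(b+2)-1 = 2*b+3 from by omega]
      · rw [Finset.Icc_eq_empty (by omega), Finset.Icc_eq_empty (by omega),
          Finset.sum_empty, Finset.sum_empty]

lemma fold_even (k : ℕ) (f : ℕ → ℤ) :
    ((Finset.Icc 1 (2*k+1)).filter (fun t => Even t)).fold max 0 f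
      = (Finset.Icc 2 (k+1)).fold max 0 (fun t => f (2*t-2)) := by
  have himg : (Finset.Icc 1 (2*k+1)).filter (fun t => Even t)
      = (Finset.Icc 2 (k+1)).image (fun t => 2*t-2) := by
    ext i
    simp only [Finset.mem_filter, Finset.mem_image, Finset.mem_Icc, Nat.even_iff]
    constructor
    · rintro ⟨⟨h1, h2⟩, h3⟩; exact ⟨i/2+1, by omega, by omega⟩
    · rintro ⟨t, ⟨h1, h2⟩, rfl⟩; omega
  rw [himg, Finset.fold_image (by intro a ha b hb hab; simp only [Finset.mem_coe, Finset.mem_Icc] at ha hb hab; omega)]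
  rfl

lemma card_split {α : Type*} [DecidableEq α] (k : ℕ) (P : ℕ → Finset α)
    (hdisj : ∀ i ∈ Finset.Icc 1 (2*k+1), ∀ j ∈ Finset.Icc 1 (2*k+1),
        i ≠ j → Disjoint (P i) (P j))
    (hcover : ∀ a : α, ∃ i ∈ Finset.Icc 1 (2*k+1), a ∈ P i)
    (I : Finset α) :
    I.card = ∑ i ∈ Finset.Icc 1 (2*k+1), (I ∩ P i).card := by
  have hI : I = (Finset.Icc 1 (2*k+1)).biUnion (fun i => I ∩ P i) := by
    ext a
    simp only [Finset.mem_biUnion, Finset.mem_inter]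
    constructor
    · intro ha; obtain ⟨i, hi, hai⟩ := hcover a; exact ⟨i, hi, ha, hai⟩
    · rintro ⟨i, _, ha, _⟩; exact ha
  conv_lhs => rw [hI]
  exact Finset.card_biUnion (fun i hi j hj hij =>
    (hdisj i hi j hj hij).mono Finset.inter_subset_right Finset.inter_subset_right)

lemma tau_nonneg (n g k : ℕ) (hk : 1 ≤ k) (hn2 : 2 ∣ n) (hg4 : 4 ∣ g)
    (hgrn : 5 * g * (2 * k + 1) ≤ n) : ∀ i, 0 ≤ tauF n g k i := by
  obtain ⟨n', rfl⟩ := hn2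
  obtain ⟨g', rfl⟩ := hg4
  have h2 : ((2*n' : ℕ) : ℤ) / 2 = (n' : ℤ) := by push_cast; omega
  have h4 : ((4*g' : ℕ) : ℤ) * (2*(k:ℤ)+1) / 4 = (g':ℤ) * (2*(k:ℤ)+1) := by
    push_cast
    rw [show (4:ℤ)*(g':ℤ)*(2*(k:ℤ)+1) = 4*((g':ℤ)*(2*(k:ℤ)+1)) from by ring,
      Int.mul_ediv_cancel_left _ (by norm_num)]
  have hcast : ((5 * (4*g') * (2*k+1) : ℕ) : ℤ) ≤ ((2*n' : ℕ) : ℤ) := by exact_mod_cast hgrn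
  have hge : (g':ℤ) * 3 ≤ (g':ℤ) * (2*(k:ℤ)+1) := by
    have h3 : (3:ℤ) ≤ 2*(k:ℤ)+1 := by
      have : (1:ℤ) ≤ (k:ℤ) := by exact_mod_cast hk
      linarith
    exact mul_le_mul_of_nonneg_left h3 (by positivity)
  have hg0 : (0:ℤ) ≤ (g':ℤ) := by positivity
  push_cast at hcast
  intro i
  unfold tauF
  split_ifs with h
  · rw [h2, h4]; push_cast; nlinarith
  · rw [h2]; push_cast; nlinarith

lemma sum_Q_eq {α : Type*} [DecidableEq α] (n g k : ℕ) (P : ℕ → Finset α)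
    (hdisj : ∀ i ∈ Finset.Icc 1 (2*k+1), ∀ j ∈ Finset.Icc 1 (2*k+1),
        i ≠ j → Disjoint (P i) (P j))
    (I : Finset α) {t : ℕ} (ht2 : 2 ≤ t) (htk : t ≤ k+1) :
    (∑ s ∈ Finset.Icc t (k+1), ((I ∩ QevenF P k s).card : ℤ))
      = ∑ i ∈ Finset.Icc (2*t-2) (2*k+1), sigF P I i := by
  rw [← sumA (sigF P I) k t ht2]
  apply Finset.sum_congr rfl
  intro s hs
  rw [Finset.mem_Icc] at hs
  have hs1 : s ≠ 1 := by omega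
  have hd : Disjoint (P (2*s-2)) (P (2*s-1)) := by
    apply hdisj (2*s-2) (by rw [Finset.mem_Icc]; omega) (2*s-1) (by rw [Finset.mem_Icc]; omega)
    omega
  rw [QevenF, if_neg hs1, Finset.inter_union_distrib_left,
    Finset.card_union_of_disjoint
      (hd.mono Finset.inter_subset_right Finset.inter_subset_right)]
  push_cast
  rfl

lemma sum_s_eq (n g k : ℕ) {t : ℕ} (ht2 : 2 ≤ t) :
    (∑ s ∈ Finset.Icc t (k+1), sevenF n g k s)
      = ∑ i ∈ Finset.Icc (2*t-2) (2*k+1), tauF n g k i := by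
  rw [← sumA (tauF n g k) k t ht2]
  apply Finset.sum_congr rfl
  intro s hs
  rw [Finset.mem_Icc] at hs
  rw [sevenF, if_neg (by omega : s ≠ 1)]

lemma indep_iff {α : Type*} [DecidableEq α] (n g k : ℕ) (hk : 1 ≤ k) (P : ℕ → Finset α)
    (hdisj : ∀ i ∈ Finset.Icc 1 (2*k+1), ∀ j ∈ Finset.Icc 1 (2*k+1),
        i ≠ j → Disjoint (P i) (P j))
    (hcard1 : (P 1).card = n) (I : Finset α) :
    NIndep (k+1) (QevenF P k) (sevenF n g k) I ↔
      ∀ t ∈ Finset.Icc 2 (k+1), ellT n g k (sigF P I) (2*t-2) ≤ 0 := by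
  have hell : ∀ t, 2 ≤ t → ellT n g k (sigF P I) (2*t-2)
      = (∑ i ∈ Finset.Icc (2*t-2) (2*k+1), sigF P I i)
        - ∑ i ∈ Finset.Icc (2*t-2) (2*k+1), tauF n g k i := by
    intro t ht
    rw [ellT, Finset.sum_sub_distrib]
  constructor
  · intro h t ht
    rw [Finset.mem_Icc] at ht
    have := h t (by rw [Finset.mem_Icc]; omega)
    rw [sum_Q_eq n g k P hdisj I ht.1 ht.2, sum_s_eq n g k ht.1] at this
    rw [hell t ht.1]
    linarith
  · intro h t ht
    rw [Finset.mem_Icc] at ht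
    rcases eq_or_lt_of_le ht.1 with h1 | h1
    · -- t = 1
      subst h1
      have hsplit : Finset.Icc 1 (k+1) = insert 1 (Finset.Icc 2 (k+1)) := by
        ext a; simp only [Finset.mem_Icc, Finset.mem_insert]; omega
      have h1n : (1:ℕ) ∉ Finset.Icc 2 (k+1) := by simp
      rw [hsplit, Finset.sum_insert h1n, Finset.sum_insert h1n]
      have hQ1 : ((I ∩ QevenF P k 1).card : ℤ) ≤ sevenF n g k 1 := by
        rw [QevenF, if_pos rfl, sevenF, if_pos rfl]
        exact_mod_cast le_trans (Finset.card_le_card Finset.inter_subset_right) hcard1.le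
      have h2 := h 2 (by rw [Finset.mem_Icc]; omega)
      rw [hell 2 le_rfl] at h2
      rw [sum_Q_eq n g k P hdisj I le_rfl (by omega), sum_s_eq n g k le_rfl]
      have : (2:ℕ)*2-2 = 2 := by omega
      rw [this] at h2 ⊢
      linarith
    · have := h t (by rw [Finset.mem_Icc]; omega)
      rw [hell t h1] at this
      rw [sum_Q_eq n g k P hdisj I h1 ht.2, sum_s_eq n g k h1]
      linarith

lemma existsD {α : Type*} [DecidableEq α] (n g k : ℕ) (hk : 1 ≤ k)
    (htau : ∀ i, 0 ≤ tauF n g k i)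
    (P : ℕ → Finset α)
    (hdisj : ∀ i ∈ Finset.Icc 1 (2*k+1), ∀ j ∈ Finset.Icc 1 (2*k+1),
        i ≠ j → Disjoint (P i) (P j)) :
    ∀ N (S : Finset α), S.card = N →
      ∃ I, I ⊆ S ∧ (∀ t ∈ Finset.Icc 2 (k+1), ellT n g k (sigF P I) (2*t-2) ≤ 0) ∧
        (I.card : ℤ) = (S.card : ℤ)
          - (Finset.Icc 2 (k+1)).fold max 0 (fun t => ellT n g k (sigF P S) (2*t-2)) := by
  intro N
  induction N using Nat.strong_induction_on with
  | _ N ih =>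
  intro S hS
  set M := (Finset.Icc 2 (k+1)).fold max 0 (fun t => ellT n g k (sigF P S) (2*t-2)) with hM
  by_cases hM0 : M ≤ 0
  · have hMeq : M = 0 := le_antisymm hM0 ((Finset.le_fold_max 0).mpr (Or.inl le_rfl))
    refine ⟨S, subset_rfl, ?_, by rw [hMeq]; ring⟩
    intro t ht
    calc ellT n g k (sigF P S) (2*t-2)
        ≤ M := (Finset.le_fold_max _).mpr (Or.inr ⟨t, ht, le_rfl⟩)
      _ ≤ 0 := hM0
  · push_neg at hM0
    obtain ⟨t₀, ht₀, hMt₀⟩ : ∃ t ∈ Finset.Icc 2 (k+1), M ≤ ellT n g k (sigF P S) (2*t-2) := by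
      rcases (Finset.le_fold_max (f := fun t => ellT n g k (sigF P S) (2*t-2))
          (b := 0) (s := Finset.Icc 2 (k+1)) M).mp (le_of_eq hM) with h | h
      · exact absurd h (by omega)
      · exact h
    have ht₀' := Finset.mem_Icc.mp ht₀
    have hpos : 0 < ellT n g k (sigF P S) (2*t₀-2) := lt_of_lt_of_le hM0 hMt₀
    have hex : ∃ i ∈ Finset.Icc (2*t₀-2) (2*k+1), (S ∩ P i).Nonempty := by
      by_contra hc
      push_neg at hc
      have hle : ellT n g k (sigF P S) (2*t₀-2) ≤ 0 := by
        rw [ellT]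
        apply Finset.sum_nonpos
        intro i hi
        have he : (S ∩ P i) = ∅ := hc i hi
        have : sigF P S i = 0 := by rw [sigF, he]; simp
        rw [this]
        linarith [htau i]
      linarith
    obtain ⟨i₀, hi₀, hne₀⟩ := hex
    rw [Finset.mem_Icc] at hi₀
    set T := (Finset.Icc 1 (2*k+1)).filter (fun i => (S ∩ P i).Nonempty) with hT
    have hi₀T : i₀ ∈ T := Finset.mem_filter.mpr ⟨Finset.mem_Icc.mpr ⟨by omega, hi₀.2⟩, hne₀⟩
    have hTne : T.Nonempty := ⟨i₀, hi₀T⟩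
    set j := T.max' hTne with hj
    have hjT : j ∈ T := T.max'_mem hTne
    have hjIcc : j ∈ Finset.Icc 1 (2*k+1) := (Finset.mem_filter.mp hjT).1
    have hjIcc' := Finset.mem_Icc.mp hjIcc
    have hjne : (S ∩ P j).Nonempty := (Finset.mem_filter.mp hjT).2
    have hji₀ : i₀ ≤ j := T.le_max' i₀ hi₀T
    obtain ⟨e, he⟩ := hjne
    have heS : e ∈ S := (Finset.mem_inter.mp he).1
    have heP : e ∈ P j := (Finset.mem_inter.mp he).2
    have hzero : ∀ i, j < i → i ≤ 2*k+1 → sigF P S i = 0 := by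
      intro i hji hik
      by_contra hne
      have : (S ∩ P i).Nonempty := by
        rw [Finset.nonempty_iff_ne_empty]
        intro hemp
        exact hne (by rw [sigF, hemp]; simp)
      have : i ∈ T := Finset.mem_filter.mpr ⟨Finset.mem_Icc.mpr ⟨by omega, hik⟩, this⟩
      exact absurd (T.le_max' i this) (by omega)
    have hsig : ∀ i ∈ Finset.Icc 1 (2*k+1),
        sigF P (S.erase e) i = sigF P S i - (if i = j then 1 else 0) := by
      intro i hi
      by_cases hij : i = j
      · have h1 : S.erase e ∩ P i = (S ∩ P i).erase e := by
          ext a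
          simp only [Finset.mem_inter, Finset.mem_erase]
          tauto
        have he' : e ∈ S ∩ P i := by rw [hij]; exact he
        rw [if_pos hij, sigF, sigF, h1, Finset.card_erase_of_mem he']
        have h2 : 1 ≤ (S ∩ P i).card := Finset.card_pos.mpr ⟨e, he'⟩
        rw [hij] at h2
        rw [hij]
        push_cast [h2]
        ring
      · have heP' : e ∉ P i := fun hc =>
          (Finset.disjoint_right.mp (hdisj i hi j hjIcc hij)) heP hc
        have : S.erase e ∩ P i = S ∩ P i := by
          ext a
          simp only [Finset.mem_inter, Finset.mem_erase]
          constructor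
          · rintro ⟨⟨_, h1⟩, h2⟩; exact ⟨h1, h2⟩
          · rintro ⟨h1, h2⟩
            exact ⟨⟨fun hae => heP' (hae ▸ h2), h1⟩, h2⟩
        rw [if_neg hij, sigF, sigF, this]
        ring
    have hell : ∀ a, 1 ≤ a → ellT n g k (sigF P (S.erase e)) a
        = ellT n g k (sigF P S) a - (if a ≤ j then 1 else 0) := by
      intro a ha
      rw [ellT, ellT]
      have hcongr : ∀ i ∈ Finset.Icc a (2*k+1),
          sigF P (S.erase e) i - tauF n g k i
            = (sigF P S i - tauF n g k i) + (if i = j then (-1:ℤ) else 0) := by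
        intro i hi
        rw [Finset.mem_Icc] at hi
        have := hsig i (Finset.mem_Icc.mpr ⟨by omega, hi.2⟩)
        split_ifs at this ⊢ with hij
        · rw [this]; ring
        · rw [this]; ring
      rw [Finset.sum_congr rfl hcongr, Finset.sum_add_distrib,
        Finset.sum_ite_eq' (Finset.Icc a (2*k+1)) j (fun _ => (-1:ℤ))]
      by_cases hja : a ≤ j
      · rw [if_pos (Finset.mem_Icc.mpr ⟨hja, hjIcc'.2⟩), if_pos hja]
        ring
      · rw [if_neg (fun hc => hja (Finset.mem_Icc.mp hc).1), if_neg hja]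
        ring
    have hellzero : ∀ a, j < a → ellT n g k (sigF P S) a ≤ 0 := by
      intro a hja
      rw [ellT]
      apply Finset.sum_nonpos
      intro i hi
      rw [Finset.mem_Icc] at hi
      rw [hzero i (by omega) hi.2]
      linarith [htau i]
    have hN1 : 1 ≤ N := by rw [← hS]; exact Finset.card_pos.mpr ⟨e, heS⟩
    obtain ⟨I, hIsub, hIind, hIcard⟩ := ih (N-1) (by omega) (S.erase e)
      (by rw [Finset.card_erase_of_mem heS, hS])
    have hfold' : (Finset.Icc 2 (k+1)).fold max 0
        (fun t => ellT n g k (sigF P (S.erase e)) (2*t-2)) = M - 1 := by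
      apply le_antisymm
      · rw [Finset.fold_max_le]
        refine ⟨by omega, fun t ht => ?_⟩
        have ht' := Finset.mem_Icc.mp ht
        rw [hell (2*t-2) (by omega)]
        by_cases hcase : 2*t-2 ≤ j
        · rw [if_pos hcase]
          have : ellT n g k (sigF P S) (2*t-2) ≤ M :=
            (Finset.le_fold_max _).mpr (Or.inr ⟨t, ht, le_rfl⟩)
          linarith
        · rw [if_neg hcase]
          have := hellzero (2*t-2) (by omega)
          linarith
      · refine (Finset.le_fold_max _).mpr (Or.inr ⟨t₀, ht₀, ?_⟩)
        rw [hell (2*t₀-2) (by omega)]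
        rw [if_pos (by omega : 2*t₀-2 ≤ j)]
        linarith
    refine ⟨I, hIsub.trans (Finset.erase_subset e S), hIind, ?_⟩
    rw [hIcard, hfold', Finset.card_erase_of_mem heS]
    have h1S : 1 ≤ S.card := Finset.card_pos.mpr ⟨e, heS⟩
    push_cast [h1S]
    ring

/-- For every `S ⊆ U` with signature `x`,
`rk_{M_even}(S) = Σ_i x_i − max(0, max_{even a} ℓ_a(x))`. -/
theorem rank_Meven
    {α : Type*} [Fintype α] [DecidableEq α]
    (n g k : ℕ) (hk : 1 ≤ k) (hn : 0 < n) (hn2 : 2 ∣ n) (hg : 0 < g) (hg4 : 4 ∣ g)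
    (hgrn : 5 * g * (2 * k + 1) ≤ n)
    (P : ℕ → Finset α)
    (hdisj : ∀ i ∈ Finset.Icc 1 (2 * k + 1), ∀ j ∈ Finset.Icc 1 (2 * k + 1),
        i ≠ j → Disjoint (P i) (P j))
    (hcover : ∀ a : α, ∃ i ∈ Finset.Icc 1 (2 * k + 1), a ∈ P i)
    (hcard : ∀ i ∈ Finset.Icc 1 (2 * k + 1), (P i).card = n)
    (S : Finset α) :
    (nrank (NIndep (k + 1) (QevenF P k) (sevenF n g k)) S : ℤ)
      = (∑ i ∈ Finset.Icc 1 (2 * k + 1), sigF P S i)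
        - ((Finset.Icc 1 (2 * k + 1)).filter (fun t => Even t)).fold max 0
            (ellT n g k (sigF P S)) := by
  have htau := tau_nonneg n g k hk hn2 hg4 hgrn
  have hcard1 : (P 1).card = n := hcard 1 (Finset.mem_Icc.mpr ⟨le_rfl, by omega⟩)
  set M := (Finset.Icc 2 (k+1)).fold max 0 (fun t => ellT n g k (sigF P S) (2*t-2)) with hMdef
  -- the sum of the signature is the cardinality
  have hsum : ∀ I : Finset α, (∑ i ∈ Finset.Icc 1 (2*k+1), sigF P I i) = (I.card : ℤ) := by
    intro I
    rw [card_split k P hdisj hcover I]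
    push_cast
    rfl
  obtain ⟨I₀, hI₀sub, hI₀ind, hI₀card⟩ := existsD n g k hk htau P hdisj S.card S rfl
  have hI₀N : NIndep (k+1) (QevenF P k) (sevenF n g k) I₀ :=
    (indep_iff n g k hk P hdisj hcard1 I₀).mpr hI₀ind
  set Tset := {c : ℕ | ∃ I : Finset α, I ⊆ S ∧
      NIndep (k+1) (QevenF P k) (sevenF n g k) I ∧ I.card = c} with hTset
  have hmem : I₀.card ∈ Tset := ⟨I₀, hI₀sub, hI₀N, rfl⟩
  have hub : ∀ c ∈ Tset, c ≤ I₀.card := by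
    rintro c ⟨I, hIsub, hIind, rfl⟩
    have hIind' := (indep_iff n g k hk P hdisj hcard1 I).mp hIind
    have hkey : M ≤ (S.card : ℤ) - (I.card : ℤ) := by
      rw [hMdef, Finset.fold_max_le]
      have hcards : (I.card : ℤ) ≤ (S.card : ℤ) := by
        exact_mod_cast Finset.card_le_card hIsub
      refine ⟨by linarith, fun t ht => ?_⟩
      have ht' := Finset.mem_Icc.mp ht
      have hmono : ∀ i, 0 ≤ sigF P S i - sigF P I i := by
        intro i
        have : I ∩ P i ⊆ S ∩ P i := Finset.inter_subset_inter hIsub le_rfl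
        have := Finset.card_le_card this
        rw [sigF, sigF]
        have h2 : ((I ∩ P i).card : ℤ) ≤ ((S ∩ P i).card : ℤ) := by exact_mod_cast this
        linarith
      have hdiff : ellT n g k (sigF P S) (2*t-2) - ellT n g k (sigF P I) (2*t-2)
          = ∑ i ∈ Finset.Icc (2*t-2) (2*k+1), (sigF P S i - sigF P I i) := by
        rw [ellT, ellT, ← Finset.sum_sub_distrib]
        apply Finset.sum_congr rfl
        intro i _
        ring
      have hsub : ∑ i ∈ Finset.Icc (2*t-2) (2*k+1), (sigF P S i - sigF P I i)
          ≤ ∑ i ∈ Finset.Icc 1 (2*k+1), (sigF P S i - sigF P I i) := by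
        apply Finset.sum_le_sum_of_subset_of_nonneg
          (Finset.Icc_subset_Icc (by omega) le_rfl)
        intro i _ _
        exact hmono i
      have htot : ∑ i ∈ Finset.Icc 1 (2*k+1), (sigF P S i - sigF P I i)
          = (S.card : ℤ) - (I.card : ℤ) := by
        rw [Finset.sum_sub_distrib, hsum S, hsum I]
      have hI0 := hIind' t ht
      linarith [hdiff, hsub.trans_eq htot]
    have : (I.card : ℤ) ≤ (I₀.card : ℤ) := by rw [hI₀card]; linarith
    exact_mod_cast this
  have hnr : nrank (NIndep (k + 1) (QevenF P k) (sevenF n g k)) S = I₀.card := by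
    rw [nrank]
    exact le_antisymm (csSup_le ⟨_, hmem⟩ hub) (le_csSup ⟨I₀.card, fun c hc => hub c hc⟩ hmem)
  rw [hnr, hI₀card, hsum S, fold_even k (ellT n g k (sigF P S))]
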